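/- arXiv:1705.10714 — 2 statements merged into one kernel-verified Lean document; each statement's English description precedes it below -/
import Mathlib

section
/- Let g be a metric on an open set U ⊆ {(u,x) ∈ ℝ⁴ : x ≠ 0} and let X = X^u∂_u + X^i∂_i be a smooth vector field on U. Set Ω = τ_x, X^r = r⁻¹x_iX^i, X̄^i = X^i − r⁻²x^i x_j X^j, write ∂_r f = r⁻¹x^i∂_i f for scalar functions f, and put Div X = ∂_uX^u + ∂_rX^r + ∂_iX̄^i. Then, pointwise on U, π̂^{αβ} + 2 X(ln Ω) g^{αβ} = −d^{-1/2}( (L_X h)^{αβ} + (Div X) h^{αβ} ) + R^{αβ}, where R = −d^{-1/2} L_X( d^{1/2} g⁻¹ − h ) − d^{-1/2}(Div X)( d^{1/2} g⁻¹ − h ) − 2 r⁻¹ τ_x⁻² X^r g⁻¹, with g⁻¹ = (g^{αβ}) and π̂ the normalized deformation tensor of X. -/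
noncomputable section

/-- Points of the coordinate chart `ℝ⁴`. -/
abbrev Pt : Type := Fin 4 → ℝ

/-- Coordinate partial derivative `∂_α f`. -/
def pd (α : Fin 4) (f : Pt → ℝ) (x : Pt) : ℝ :=
  fderiv ℝ f x (Pi.single α (1 : ℝ))

/-- `|g| = |det (g_{αβ})|`. -/
def adet (g : Pt → Matrix (Fin 4) (Fin 4) ℝ) (x : Pt) : ℝ := |(g x).det|

/-- Inverse metric `g^{αβ}`. -/
def ginv (g : Pt → Matrix (Fin 4) (Fin 4) ℝ) (x : Pt) : Matrix (Fin 4) (Fin 4) ℝ := (g x)⁻¹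

/-- The wave operator `□_g φ = |g|^{-1/2} ∂_α(|g|^{1/2} g^{αβ} ∂_β φ)`. -/
def boxg (g : Pt → Matrix (Fin 4) (Fin 4) ℝ) (φ : Pt → ℝ) (x : Pt) : ℝ :=
  (Real.sqrt (adet g x))⁻¹ *
    ∑ α : Fin 4, pd α (fun y => Real.sqrt (adet g y) * ∑ β : Fin 4, ginv g y α β * pd β φ y) x

/-- `X f = X^α ∂_α f`. -/
def Xapp (X : Fin 4 → Pt → ℝ) (f : Pt → ℝ) (x : Pt) : ℝ := ∑ γ : Fin 4, X γ x * pd γ f x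

/-- A smooth symmetric everywhere-nondegenerate metric on `U`. -/
structure IsMetricOn (g : Pt → Matrix (Fin 4) (Fin 4) ℝ) (U : Set Pt) : Prop where
  smooth : ∀ α β : Fin 4, ContDiffOn ℝ (⊤ : ℕ∞) (fun x => g x α β) U
  symm : ∀ x ∈ U, ∀ α β : Fin 4, g x α β = g x β α
  det_ne : ∀ x ∈ U, (g x).det ≠ 0

/-- Deformation tensor `π_{αβ} = (L_X g)_{αβ}` of `X` (lower indices). -/
def piLow (g : Pt → Matrix (Fin 4) (Fin 4) ℝ) (X : Fin 4 → Pt → ℝ) (x : Pt) (α β : Fin 4) : ℝ :=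
  (∑ γ : Fin 4, X γ x * pd γ (fun y => g y α β) x)
    + (∑ γ : Fin 4, g x γ β * pd α (X γ) x) + (∑ γ : Fin 4, g x α γ * pd β (X γ) x)

/-- Raised deformation tensor `π^{αβ}`. -/
def piUp (g : Pt → Matrix (Fin 4) (Fin 4) ℝ) (X : Fin 4 → Pt → ℝ) (x : Pt) (α β : Fin 4) : ℝ :=
  ∑ α' : Fin 4, ∑ β' : Fin 4, ginv g x α α' * ginv g x β β' * piLow g X x α' β'

/-- Normalized deformation tensor `π̂^{αβ} = π^{αβ} - (1/2) g^{αβ} (g_{γδ} π^{γδ})`. -/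
def hatPi (g : Pt → Matrix (Fin 4) (Fin 4) ℝ) (X : Fin 4 → Pt → ℝ) (x : Pt) (α β : Fin 4) : ℝ :=
  piUp g X x α β - (1/2) * ginv g x α β * (∑ γ : Fin 4, ∑ δ : Fin 4, g x γ δ * piUp g X x γ δ)

/-- Lie derivative of a contravariant 2-tensor:
`(L_X R)^{αβ} = X^γ∂_γR^{αβ} - R^{γβ}∂_γX^α - R^{αγ}∂_γX^β`. -/
def lieT (X : Fin 4 → Pt → ℝ) (R : Pt → Fin 4 → Fin 4 → ℝ) (x : Pt) (α β : Fin 4) : ℝ :=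
  (∑ γ : Fin 4, X γ x * pd γ (fun y => R y α β) x)
    - (∑ γ : Fin 4, R x γ β * pd γ (X α) x)
    - (∑ γ : Fin 4, R x α γ * pd γ (X β) x)

/-- `τ_x = ⟨x⟩ = (1+|x|²)^{1/2}` in coordinates `(u,x)` (the index `0` is `u`). -/
def tauX (p : Pt) : ℝ := Real.sqrt (1 + ∑ i : Fin 3, (p i.succ) ^ 2)

/-- `r = |x|`. -/
def rB (p : Pt) : ℝ := Real.sqrt (∑ i : Fin 3, (p i.succ) ^ 2)

/-- The reference tensor `h`: `h^{uu}=0`, `h^{ui}=h^{iu}=-ω^i`, `h^{ij}=δ^{ij}`,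
where `ω^i = x^i/τ_x`. -/
def hmat (p : Pt) (α β : Fin 4) : ℝ :=
  if α = 0 then (if β = 0 then 0 else -(p β / tauX p))
  else if β = 0 then -(p α / tauX p)
  else if α = β then 1 else 0

/-- `d^{1/2} g⁻¹ - h`. -/
def Mten (g : Pt → Matrix (Fin 4) (Fin 4) ℝ) (p : Pt) (α β : Fin 4) : ℝ :=
  Real.sqrt (adet g p) * ginv g p α β - hmat p α β

/-- The radial component `X^r = r⁻¹ x_i X^i`. -/
def Xrad (X : Fin 4 → Pt → ℝ) (p : Pt) : ℝ :=
  (rB p)⁻¹ * ∑ i : Fin 3, p i.succ * X i.succ p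

/-- The angular part `X̄^i = X^i - r⁻² x^i x_j X^j`. -/
def Xang (X : Fin 4 → Pt → ℝ) (i : Fin 3) (p : Pt) : ℝ :=
  X i.succ p - ((rB p) ^ 2)⁻¹ * p i.succ * ∑ j : Fin 3, p j.succ * X j.succ p

/-- Radial derivative `∂_r f = r⁻¹ x^i ∂_i f`. -/
def pdr (f : Pt → ℝ) (p : Pt) : ℝ :=
  (rB p)⁻¹ * ∑ i : Fin 3, p i.succ * pd i.succ f p

/-- `Div X = ∂_u X^u + ∂_r X^r + ∂_i X̄^i`. -/
def divB (X : Fin 4 → Pt → ℝ) (p : Pt) : ℝ :=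
  pd 0 (X 0) p + pdr (Xrad X) p + ∑ i : Fin 3, pd i.succ (Xang X i) p

/-- The remainder tensor `R` of Statement 7. -/
def Rrem (g : Pt → Matrix (Fin 4) (Fin 4) ℝ) (X : Fin 4 → Pt → ℝ) (p : Pt) (α β : Fin 4) : ℝ :=
  -((Real.sqrt (adet g p))⁻¹ * lieT X (Mten g) p α β)
    - (Real.sqrt (adet g p))⁻¹ * divB X p * Mten g p α β
    - 2 * (rB p)⁻¹ * ((tauX p) ^ 2)⁻¹ * Xrad X p * ginv g p α β

section Helpers
variable {p : Pt} {γ : Fin 4} {f g : Pt → ℝ}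

theorem pd_hasFDerivAt {L : Pt →L[ℝ] ℝ} (h : HasFDerivAt f L p) (γ : Fin 4) :
    pd γ f p = L (Pi.single γ 1) := by rw [pd, h.fderiv]

theorem pd_congr_nhds (h : f =ᶠ[nhds p] g) : pd γ f p = pd γ g p := by
  rw [pd, pd, Filter.EventuallyEq.fderiv_eq h]

theorem pd_const (c : ℝ) : pd γ (fun _ => c) p = 0 := by
  rw [pd, fderiv_fun_const]; simp

theorem pd_add (hf : DifferentiableAt ℝ f p) (hg : DifferentiableAt ℝ g p) :
    pd γ (fun y => f y + g y) p = pd γ f p + pd γ g p := by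
  rw [pd, fderiv_fun_add hf hg]; rfl

theorem pd_sub (hf : DifferentiableAt ℝ f p) (hg : DifferentiableAt ℝ g p) :
    pd γ (fun y => f y - g y) p = pd γ f p - pd γ g p := by
  rw [pd, fderiv_fun_sub hf hg]; rfl

theorem pd_neg : pd γ (fun y => -f y) p = - pd γ f p := by
  rw [pd, fderiv_fun_neg]; rfl

theorem pd_mul (hf : DifferentiableAt ℝ f p) (hg : DifferentiableAt ℝ g p) :
    pd γ (fun y => f y * g y) p = pd γ f p * g p + f p * pd γ g p := by
  rw [pd, fderiv_fun_mul hf hg]; simp [pd]; ring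

theorem pd_const_mul (c : ℝ) (hf : DifferentiableAt ℝ f p) :
    pd γ (fun y => c * f y) p = c * pd γ f p := by
  rw [pd, fderiv_const_mul hf]; rfl

theorem pd_sum {ι : Type*} (s : Finset ι) (F : ι → Pt → ℝ)
    (hF : ∀ i ∈ s, DifferentiableAt ℝ (F i) p) :
    pd γ (fun y => ∑ i ∈ s, F i y) p = ∑ i ∈ s, pd γ (F i) p := by
  rw [pd, fderiv_fun_sum hF]; simp [pd]

theorem pd_proj (β : Fin 4) : pd γ (fun y : Pt => y β) p = if β = γ then 1 else 0 := by
  have h2 : pd γ (fun y : Pt => y β) p = _ :=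
    pd_hasFDerivAt ((ContinuousLinearMap.proj (R := ℝ) (φ := fun _ : Fin 4 => ℝ) β).hasFDerivAt
      (x := p)) γ
  rw [h2]; simp [Pi.single_apply]

theorem pd_inv (hf : DifferentiableAt ℝ f p) (h0 : f p ≠ 0) :
    pd γ (fun y => (f y)⁻¹) p = -(pd γ f p) / (f p)^2 := by
  have h := (hasDerivAt_inv h0).comp_hasFDerivAt p hf.hasFDerivAt
  have h2 : pd γ (fun y => (f y)⁻¹) p = _ := pd_hasFDerivAt h γ
  rw [h2]; simp [pd]; ring

theorem pd_sqrt (hf : DifferentiableAt ℝ f p) (h0 : f p ≠ 0) :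
    pd γ (fun y => Real.sqrt (f y)) p = pd γ f p / (2 * Real.sqrt (f p)) := by
  have h := (Real.hasDerivAt_sqrt h0).comp_hasFDerivAt p hf.hasFDerivAt
  have h2 : pd γ (fun y => Real.sqrt (f y)) p = _ := pd_hasFDerivAt h γ
  rw [h2]; simp [pd]; ring

theorem pd_log (hf : DifferentiableAt ℝ f p) (h0 : f p ≠ 0) :
    pd γ (fun y => Real.log (f y)) p = pd γ f p / f p := by
  have h := (Real.hasDerivAt_log h0).comp_hasFDerivAt p hf.hasFDerivAt
  have h2 : pd γ (fun y => Real.log (f y)) p = _ := pd_hasFDerivAt h γ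
  rw [h2]; simp [pd]; ring

theorem pd_prod {ι : Type*} [DecidableEq ι] (s : Finset ι) (F : ι → Pt → ℝ)
    (hF : ∀ i ∈ s, DifferentiableAt ℝ (F i) p) :
    pd γ (fun y => ∏ i ∈ s, F i y) p
      = ∑ i ∈ s, (∏ j ∈ s.erase i, F j p) * pd γ (F i) p := by
  have h := HasFDerivAt.finset_prod (u := s) (fun i hi => (hF i hi).hasFDerivAt)
  have h2 : pd γ (fun y => ∏ i ∈ s, F i y) p = _ := pd_hasFDerivAt h γ
  rw [h2]; simp [pd]


theorem diffAt_prod {ι : Type*} [DecidableEq ι] (s : Finset ι) (F : ι → Pt → ℝ)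
    (hF : ∀ i ∈ s, DifferentiableAt ℝ (F i) p) :
    DifferentiableAt ℝ (fun y => ∏ i ∈ s, F i y) p :=
  (HasFDerivAt.finset_prod (fun i hi => (hF i hi).hasFDerivAt)).differentiableAt

section Det
variable (M : Pt → Matrix (Fin 4) (Fin 4) ℝ)
  (hM : ∀ μ ν, DifferentiableAt ℝ (fun y => M y μ ν) p)

theorem det_eq_sum : (fun y => (M y).det)
    = fun y => ∑ σ : Equiv.Perm (Fin 4), ((Equiv.Perm.sign σ : ℤ) : ℝ) * ∏ i, M y (σ i) i := by
  funext y; rw [Matrix.det_apply']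

include hM in
theorem diffAt_det_term (σ : Equiv.Perm (Fin 4)) :
    DifferentiableAt ℝ (fun y => ((Equiv.Perm.sign σ : ℤ) : ℝ) * ∏ i, M y (σ i) i) p := by
  exact DifferentiableAt.const_mul
    (diffAt_prod Finset.univ (fun i y => M y (σ i) i) (fun i _ => hM (σ i) i)) _

include hM in
theorem diffAt_det : DifferentiableAt ℝ (fun y => (M y).det) p := by
  rw [det_eq_sum]
  exact DifferentiableAt.fun_sum fun σ _ => diffAt_det_term M hM σ

include hM in
theorem pd_det : pd γ (fun y => (M y).det) p
    = ∑ j, ∑ ν, (M p).adjugate j ν * pd γ (fun y => M y ν j) p := by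
  have step1 : pd γ (fun y => (M y).det) p
      = ∑ σ : Equiv.Perm (Fin 4), ∑ j, ((Equiv.Perm.sign σ : ℤ) : ℝ) *
          ((∏ i ∈ Finset.univ.erase j, M p (σ i) i) * pd γ (fun y => M y (σ j) j) p) := by
    rw [det_eq_sum, pd_sum _ _ (fun σ _ => diffAt_det_term M hM σ)]
    refine Finset.sum_congr rfl fun σ _ => ?_
    rw [pd_const_mul _ (diffAt_prod Finset.univ (fun i y => M y (σ i) i)
        (fun i _ => hM (σ i) i)),
      pd_prod _ _ (fun i _ => hM (σ i) i), Finset.mul_sum]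
  rw [step1, Finset.sum_comm]
  refine Finset.sum_congr rfl fun j _ => ?_
  have step2 : ∑ σ : Equiv.Perm (Fin 4), ((Equiv.Perm.sign σ : ℤ) : ℝ) *
        ((∏ i ∈ Finset.univ.erase j, M p (σ i) i) * pd γ (fun y => M y (σ j) j) p)
      = ((M p).updateCol j (fun ν => pd γ (fun y => M y ν j) p)).det := by
    rw [Matrix.det_apply']
    refine Finset.sum_congr rfl fun σ _ => ?_
    congr 1
    rw [← Finset.mul_prod_erase Finset.univ _ (Finset.mem_univ j), Matrix.updateCol_self,
      Finset.prod_congr rfl (fun i hi =>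
        Matrix.updateCol_ne (M := M p) (c := fun ν => pd γ (fun y => M y ν j) p)
          (Finset.ne_of_mem_erase hi)), mul_comm]
  rw [step2, ← Matrix.cramer_apply, Matrix.cramer_eq_adjugate_mulVec]
  simp [Matrix.mulVec, dotProduct]
end Det


end Helpers
section Geometry
variable {p : Pt} {γ : Fin 4}

theorem diffAt_inv {f : Pt → ℝ} (hf : DifferentiableAt ℝ f p) (h0 : f p ≠ 0) :
    DifferentiableAt ℝ (fun y => (f y)⁻¹) p :=
  ((hasDerivAt_inv h0).comp_hasFDerivAt p hf.hasFDerivAt).differentiableAt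

theorem diffAt_sqrt {f : Pt → ℝ} (hf : DifferentiableAt ℝ f p) (h0 : f p ≠ 0) :
    DifferentiableAt ℝ (fun y => Real.sqrt (f y)) p :=
  ((Real.hasDerivAt_sqrt h0).comp_hasFDerivAt p hf.hasFDerivAt).differentiableAt

theorem dproj (δ : Fin 4) : DifferentiableAt ℝ (fun y : Pt => y δ) p :=
  ((ContinuousLinearMap.proj (R := ℝ) (φ := fun _ : Fin 4 => ℝ) δ).hasFDerivAt
    (x := p)).differentiableAt

theorem dq : DifferentiableAt ℝ (fun y : Pt => ∑ i : Fin 3, (y i.succ)^2) p := by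
  refine DifferentiableAt.fun_sum fun i _ => ?_
  simpa [sq] using (dproj (p := p) i.succ).fun_mul (dproj i.succ)

theorem pd_sq (δ : Fin 4) : pd γ (fun y : Pt => (y δ)^2) p = 2 * p δ * (if δ = γ then 1 else 0) := by
  have h : (fun y : Pt => (y δ)^2) = fun y => y δ * y δ := by funext y; ring
  rw [h, pd_mul (dproj δ) (dproj δ), pd_proj]; ring

theorem pd_q : pd γ (fun y : Pt => ∑ i : Fin 3, (y i.succ)^2) p
    = if γ = 0 then 0 else 2 * p γ := by
  rw [pd_sum _ _ (fun i _ => by simpa [sq] using (dproj (p := p) i.succ).fun_mul (dproj i.succ))]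
  simp only [pd_sq]
  cases γ using Fin.cases with
  | zero => simp [Fin.succ_ne_zero]
  | succ j => simp [Fin.succ_inj, Finset.sum_ite_eq, mul_ite, Fin.succ_ne_zero]

theorem q_pos (hq : (∑ i : Fin 3, (p i.succ)^2) ≠ 0) : 0 < ∑ i : Fin 3, (p i.succ)^2 :=
  lt_of_le_of_ne (Finset.sum_nonneg fun i _ => sq_nonneg _) (Ne.symm hq)

theorem tau_base_pos : (0:ℝ) < 1 + ∑ i : Fin 3, (p i.succ)^2 := by positivity

theorem tau_pos : 0 < tauX p := Real.sqrt_pos.mpr tau_base_pos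

theorem tau_sq : tauX p ^ 2 = 1 + ∑ i : Fin 3, (p i.succ)^2 :=
  Real.sq_sqrt tau_base_pos.le

theorem dtau : DifferentiableAt ℝ tauX p :=
  diffAt_sqrt ((differentiableAt_const (1:ℝ)).add dq) tau_base_pos.ne'

theorem pd_tau : pd γ tauX p = (if γ = 0 then 0 else p γ) / tauX p := by
  have h : pd γ tauX p
      = pd γ (fun y : Pt => (1:ℝ) + ∑ i : Fin 3, (y i.succ)^2) p
        / (2 * Real.sqrt (1 + ∑ i : Fin 3, (p i.succ)^2)) :=
    pd_sqrt ((differentiableAt_const (1:ℝ)).add dq) tau_base_pos.ne'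
  rw [h, pd_add (differentiableAt_const _) dq, pd_const, pd_q]
  have ht : tauX p = Real.sqrt (1 + ∑ i : Fin 3, (p i.succ)^2) := rfl
  rw [← ht]
  have := tau_pos (p := p)
  split_ifs <;> field_simp <;> ring

theorem rB_pos (hq : (∑ i : Fin 3, (p i.succ)^2) ≠ 0) : 0 < rB p :=
  Real.sqrt_pos.mpr (q_pos hq)

theorem rB_sq : rB p ^ 2 = ∑ i : Fin 3, (p i.succ)^2 :=
  Real.sq_sqrt (Finset.sum_nonneg fun i _ => sq_nonneg _)

theorem drB (hq : (∑ i : Fin 3, (p i.succ)^2) ≠ 0) : DifferentiableAt ℝ rB p :=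
  diffAt_sqrt dq hq

theorem pd_rB (hq : (∑ i : Fin 3, (p i.succ)^2) ≠ 0) :
    pd γ rB p = (if γ = 0 then 0 else p γ) / rB p := by
  have h : pd γ rB p
      = pd γ (fun y : Pt => ∑ i : Fin 3, (y i.succ)^2) p
        / (2 * Real.sqrt (∑ i : Fin 3, (p i.succ)^2)) := pd_sqrt dq hq
  rw [h, pd_q]
  have ht : rB p = Real.sqrt (∑ i : Fin 3, (p i.succ)^2) := rfl
  rw [← ht]
  have := rB_pos hq
  split_ifs <;> field_simp <;> ring

end Geometry
section Div
variable {p : Pt} {X : Fin 4 → Pt → ℝ}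

theorem dSf (hX : ∀ a, DifferentiableAt ℝ (X a) p) :
    DifferentiableAt ℝ (fun y : Pt => ∑ j : Fin 3, y j.succ * X j.succ y) p :=
  DifferentiableAt.fun_sum fun j _ => (dproj j.succ).fun_mul (hX j.succ)

theorem pd_Sf (γ : Fin 4) (hX : ∀ a, DifferentiableAt ℝ (X a) p) :
    pd γ (fun y : Pt => ∑ j : Fin 3, y j.succ * X j.succ y) p
      = (if γ = 0 then 0 else X γ p) + ∑ j : Fin 3, p j.succ * pd γ (X j.succ) p := by
  rw [pd_sum _ _ (fun j _ => (dproj j.succ).fun_mul (hX j.succ))]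
  have h : ∀ j : Fin 3, pd γ (fun y : Pt => y j.succ * X j.succ y) p
      = (if j.succ = γ then 1 else 0) * X j.succ p + p j.succ * pd γ (X j.succ) p := by
    intro j; rw [pd_mul (dproj j.succ) (hX j.succ), pd_proj]
  simp only [h]
  rw [Finset.sum_add_distrib]
  congr 1
  cases γ using Fin.cases with
  | zero => simp [Fin.succ_ne_zero]
  | succ k => simp [Fin.succ_inj, Fin.succ_ne_zero]

theorem divB_eq (hX : ∀ a, DifferentiableAt ℝ (X a) p)
    (hq : (∑ i : Fin 3, (p i.succ)^2) ≠ 0) :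
    divB X p = (∑ a : Fin 4, pd a (X a) p) - 2 * (rB p)⁻¹ * Xrad X p := by
  classical
  set q : ℝ := ∑ i : Fin 3, (p i.succ)^2 with hqdef
  set S : ℝ := ∑ j : Fin 3, p j.succ * X j.succ p with hSdef
  set T : Fin 3 → ℝ := fun i => ∑ j : Fin 3, p j.succ * pd i.succ (X j.succ) p with hTdef
  set W : ℝ := ∑ i : Fin 3, p i.succ * T i with hWdef
  have hq' : (∑ i : Fin 3, (p i.succ)^2) = q := rfl
  have hS' : (∑ j : Fin 3, p j.succ * X j.succ p) = S := rfl
  have hT' : ∀ i : Fin 3, (∑ j : Fin 3, p j.succ * pd i.succ (X j.succ) p) = T i := fun _ => rfl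
  have hr : rB p ≠ 0 := (rB_pos hq).ne'
  have hr2 : rB p ^ 2 = q := rB_sq
  -- pd of Xrad
  have hA : ∀ i : Fin 3, pd i.succ (Xrad X) p
      = -(pd i.succ rB p) / rB p ^ 2 * S + (rB p)⁻¹ * ((X i.succ p) + T i) := by
    intro i
    have e : Xrad X = fun y => (fun z : Pt => (rB z)⁻¹) y
        * (fun z : Pt => ∑ j : Fin 3, z j.succ * X j.succ z) y := rfl
    rw [e, pd_mul (diffAt_inv (drB hq) hr) (dSf hX), pd_inv (drB hq) hr, pd_Sf _ hX]
    simp only [Fin.succ_ne_zero, if_false]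
    rw [hS', hT' i]
  have hpdrA : pdr (Xrad X) p = (rB p)⁻¹ * (-(S / rB p ^ 3) * q + (rB p)⁻¹ * S + (rB p)⁻¹ * W) := by
    rw [pdr]
    congr 1
    have e : ∀ i : Fin 3, p i.succ * pd i.succ (Xrad X) p
        = -(S / rB p ^ 3) * (p i.succ)^2 + (rB p)⁻¹ * (p i.succ * X i.succ p)
          + (rB p)⁻¹ * (p i.succ * T i) := by
      intro i
      rw [hA i, pd_rB hq]
      simp only [Fin.succ_ne_zero, if_false]
      field_simp
      ring
    rw [Finset.sum_congr rfl fun i _ => e i, Finset.sum_add_distrib, Finset.sum_add_distrib,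
      ← Finset.mul_sum, ← Finset.mul_sum, ← Finset.mul_sum]
  -- pd of Xang
  have hqf : ∀ i : Fin 3, Xang X i = fun y : Pt => X i.succ y -
      ((fun z : Pt => (∑ j : Fin 3, (z j.succ)^2)) y)⁻¹ * y i.succ
        * ((fun z : Pt => ∑ j : Fin 3, z j.succ * X j.succ z) y) := by
    intro i; funext y
    rw [Xang, rB, Real.sq_sqrt (Finset.sum_nonneg fun j _ => sq_nonneg _)]
  have hB : ∀ i : Fin 3, pd i.succ (Xang X i) p
      = pd i.succ (X i.succ) p -
        (((-(2 * p i.succ) / q ^ 2) * p i.succ + q⁻¹) * S + q⁻¹ * p i.succ * (X i.succ p + T i)) := by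
    intro i
    rw [hqf i]
    rw [pd_sub (hX i.succ) (((diffAt_inv dq hq).fun_mul (dproj i.succ)).fun_mul (dSf hX))]
    rw [pd_mul ((diffAt_inv dq hq).fun_mul (dproj i.succ)) (dSf hX),
      pd_mul (diffAt_inv dq hq) (dproj i.succ), pd_inv dq hq, pd_q, pd_proj, pd_Sf _ hX]
    simp only [Fin.succ_ne_zero, if_false, if_true, if_pos rfl]
    rw [hq', hS', hT' i]
    ring
  have e : ∀ i : Fin 3, pd i.succ (Xang X i) p
      = pd i.succ (X i.succ) p - (-(2/q^2)) * (p i.succ)^2 * S - q⁻¹ * S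
        - q⁻¹ * (p i.succ * X i.succ p) - q⁻¹ * (p i.succ * T i) := by
    intro i; rw [hB i]; ring
  have h1 : ∑ i : Fin 3, (-(2/q^2)) * (p i.succ)^2 * S = -(2/q^2) * q * S := by
    have : ∀ i : Fin 3, (-(2/q^2)) * (p i.succ)^2 * S = (-(2/q^2) * S) * (p i.succ)^2 := by
      intro i; ring
    rw [Finset.sum_congr rfl fun i _ => this i, ← Finset.mul_sum, hq']; ring
  have h2 : ∑ i : Fin 3, q⁻¹ * (p i.succ * X i.succ p) = q⁻¹ * S := by
    rw [← Finset.mul_sum, hS']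
  have h3 : ∑ i : Fin 3, q⁻¹ * (p i.succ * T i) = q⁻¹ * W := by
    rw [← Finset.mul_sum]
  have hang : ∑ i : Fin 3, pd i.succ (Xang X i) p
      = (∑ i : Fin 3, pd i.succ (X i.succ) p)
        - (-(2/q^2) * q * S) - 3 * (q⁻¹ * S) - q⁻¹ * S - q⁻¹ * W := by
    rw [Finset.sum_congr rfl fun i _ => e i]
    simp only [Finset.sum_sub_distrib]
    rw [h1, h2, h3]
    simp only [Finset.sum_const, Finset.card_univ, Fintype.card_fin, nsmul_eq_mul]
    norm_num
  -- assemble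
  rw [divB, hpdrA, hang, Xrad, hS', Fin.sum_univ_four, Fin.sum_univ_three]
  simp only [show (Fin.succ 0 : Fin 4) = 1 from rfl, show (Fin.succ 1 : Fin 4) = 2 from rfl,
    show (Fin.succ 2 : Fin 4) = 3 from rfl]
  rw [← hr2]
  field_simp
  ring
end Div

section Log
variable {p : Pt} {X : Fin 4 → Pt → ℝ}

theorem Xapp_log_tau (hX : ∀ a, DifferentiableAt ℝ (X a) p) :
    Xapp X (fun y => Real.log (tauX y)) p
      = (∑ i : Fin 3, p i.succ * X i.succ p) / tauX p ^ 2 := by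
  have hpd : ∀ γ : Fin 4, pd γ (fun y => Real.log (tauX y)) p
      = ((if γ = 0 then 0 else p γ) / tauX p) / tauX p := by
    intro γ
    have h : pd γ (fun y => Real.log (tauX y)) p = pd γ tauX p / tauX p := pd_log dtau tau_pos.ne'
    rw [h, pd_tau]
  rw [Xapp, Fin.sum_univ_succ]
  simp only [hpd]
  simp only [Fin.succ_ne_zero, if_false, if_pos rfl, if_true]
  have ht : tauX p ≠ 0 := tau_pos.ne'
  have e : ∀ i : Fin 3, X i.succ p * (p i.succ / tauX p / tauX p)
      = (p i.succ * X i.succ p) / tauX p ^ 2 := by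
    intro i; field_simp
  rw [Finset.sum_congr rfl fun i _ => e i, ← Finset.sum_div]
  simp
end Log
section Metric
variable {U : Set Pt} {g : Pt → Matrix (Fin 4) (Fin 4) ℝ} {p : Pt} {γ : Fin 4}

theorem ginv_entry (y : Pt) (α β : Fin 4) :
    ginv g y α β = ((g y).det)⁻¹ * (g y).adjugate α β := by
  rw [ginv, Matrix.inv_def, Ring.inverse_eq_inv']
  simp [smul_eq_mul]

variable (hU : IsOpen U) (hg : IsMetricOn g U) (hp : p ∈ U)
include hU hg hp

theorem dgE (α β : Fin 4) : DifferentiableAt ℝ (fun y => g y α β) p :=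
  ((hg.smooth α β).contDiffAt (hU.mem_nhds hp)).differentiableAt (by simp)

theorem ddet : DifferentiableAt ℝ (fun y => (g y).det) p := diffAt_det _ (dgE hU hg hp)

theorem dadj (α β : Fin 4) : DifferentiableAt ℝ (fun y => (g y).adjugate α β) p := by
  have h : (fun y => (g y).adjugate α β) = fun y => ((g y).updateRow β (Pi.single α 1)).det := by
    funext y; rw [Matrix.adjugate_apply]
  rw [h]
  refine diffAt_det _ (fun μ ν => ?_)
  by_cases hμ : μ = β
  · simp only [Matrix.updateRow_apply, hμ, if_true, if_pos rfl]
    exact differentiableAt_const _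
  · simp only [Matrix.updateRow_apply, hμ, if_false]
    exact dgE hU hg hp μ ν

theorem dginv (α β : Fin 4) : DifferentiableAt ℝ (fun y => ginv g y α β) p := by
  have h : (fun y => ginv g y α β) = fun y => ((g y).det)⁻¹ * (g y).adjugate α β := by
    funext y; exact ginv_entry y α β
  rw [h]
  exact (diffAt_inv (ddet hU hg hp) (hg.det_ne p hp)).mul (dadj hU hg hp α β)

omit hU hp in
theorem gmulF (y : Pt) (hy : y ∈ U) (α β : Fin 4) :
    ∑ m : Fin 4, g y α m * ginv g y m β = if α = β then (1:ℝ) else 0 := by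
  have h1 : g y * (g y)⁻¹ = 1 := Matrix.mul_nonsing_inv _
    (isUnit_iff_ne_zero.mpr (hg.det_ne y hy))
  have h2 := congrFun (congrFun h1 α) β
  simpa [Matrix.mul_apply, Matrix.one_apply, ginv] using h2

omit hU hp in
theorem FmulG (y : Pt) (hy : y ∈ U) (α β : Fin 4) :
    ∑ m : Fin 4, ginv g y α m * g y m β = if α = β then (1:ℝ) else 0 := by
  have h1 : (g y)⁻¹ * g y = 1 := Matrix.nonsing_inv_mul _
    (isUnit_iff_ne_zero.mpr (hg.det_ne y hy))
  have h2 := congrFun (congrFun h1 α) β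
  simpa [Matrix.mul_apply, Matrix.one_apply, ginv] using h2

omit hU in
theorem Fsymm (α β : Fin 4) : ginv g p α β = ginv g p β α := by
  have hsym : Matrix.transpose (g p) = g p := by
    ext a b; exact hg.symm p hp b a
  have h : Matrix.transpose ((g p)⁻¹) = (g p)⁻¹ := by
    rw [Matrix.transpose_nonsing_inv, hsym]
  have h2 := congrFun (congrFun h β) α
  simpa [ginv, Matrix.transpose_apply] using h2

theorem pd_gsymm (μ ν : Fin 4) :
    pd γ (fun y => g y μ ν) p = pd γ (fun y => g y ν μ) p :=
  pd_congr_nhds (Filter.eventuallyEq_of_mem (hU.mem_nhds hp) fun y hy => hg.symm y hy μ ν)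

theorem pd_ginv (μ β : Fin 4) :
    pd γ (fun y => ginv g y μ β) p
      = -∑ a : Fin 4, ∑ b : Fin 4,
          ginv g p μ a * pd γ (fun y => g y a b) p * ginv g p b β := by
  have hdF := dginv hU hg hp
  have hdg := dgE hU hg hp
  have h0 : ∀ a : Fin 4, ∑ m : Fin 4, (pd γ (fun y => g y a m) p * ginv g p m β
      + g p a m * pd γ (fun y => ginv g y m β) p) = 0 := by
    intro a
    have hev : (fun y => ∑ m : Fin 4, g y a m * ginv g y m β)
        =ᶠ[nhds p] (fun _ => if a = β then (1:ℝ) else 0) :=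
      Filter.eventuallyEq_of_mem (hU.mem_nhds hp) fun y hy => gmulF hg y hy a β
    have h1 : pd γ (fun y => ∑ m : Fin 4, g y a m * ginv g y m β) p = 0 := by
      rw [pd_congr_nhds hev, pd_const]
    rw [pd_sum _ _ (fun m _ => (hdg a m).fun_mul (hdF m β))] at h1
    rw [← h1]
    exact Finset.sum_congr rfl fun m _ => (pd_mul (hdg a m) (hdF m β)).symm
  have h2 : ∑ a : Fin 4, ginv g p μ a * ∑ m : Fin 4, (pd γ (fun y => g y a m) p * ginv g p m β
      + g p a m * pd γ (fun y => ginv g y m β) p) = 0 := by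
    simp only [h0, mul_zero, Finset.sum_const_zero]
  have h3 : ∑ a : Fin 4, ginv g p μ a * ∑ m : Fin 4, (pd γ (fun y => g y a m) p * ginv g p m β
      + g p a m * pd γ (fun y => ginv g y m β) p)
      = (∑ a : Fin 4, ∑ m : Fin 4, ginv g p μ a * (pd γ (fun y => g y a m) p * ginv g p m β))
        + ∑ a : Fin 4, ∑ m : Fin 4, ginv g p μ a * (g p a m * pd γ (fun y => ginv g y m β) p) := by
    simp only [Finset.mul_sum, mul_add, Finset.sum_add_distrib]
  have h4 : ∑ a : Fin 4, ∑ m : Fin 4, ginv g p μ a * (g p a m * pd γ (fun y => ginv g y m β) p)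
      = pd γ (fun y => ginv g y μ β) p := by
    rw [Finset.sum_comm]
    have e : ∀ m : Fin 4, ∑ a : Fin 4, ginv g p μ a * (g p a m * pd γ (fun y => ginv g y m β) p)
        = (if μ = m then 1 else 0) * pd γ (fun y => ginv g y m β) p := by
      intro m
      rw [← FmulG hg p hp μ m, Finset.sum_mul]
      exact Finset.sum_congr rfl fun a _ => by ring
    rw [Finset.sum_congr rfl fun m _ => e m]
    simp
  have h5 : ∑ a : Fin 4, ∑ m : Fin 4, ginv g p μ a * (pd γ (fun y => g y a m) p * ginv g p m β)
      = ∑ a : Fin 4, ∑ b : Fin 4, ginv g p μ a * pd γ (fun y => g y a b) p * ginv g p b β := by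
    exact Finset.sum_congr rfl fun a _ => Finset.sum_congr rfl fun b _ => by ring
  rw [h3, h4, h5] at h2
  linarith

omit hU in
theorem adjugate_eq (α β : Fin 4) : (g p).adjugate α β = (g p).det * ginv g p α β := by
  rw [ginv_entry]
  field_simp [hg.det_ne p hp]

theorem pd_det_tr : pd γ (fun y => (g y).det) p
    = (g p).det * ∑ μ : Fin 4, ∑ ν : Fin 4, ginv g p μ ν * pd γ (fun y => g y μ ν) p := by
  rw [pd_det _ (dgE hU hg hp), Finset.mul_sum]
  refine Finset.sum_congr rfl fun j _ => ?_
  rw [Finset.mul_sum]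
  refine Finset.sum_congr rfl fun ν _ => ?_
  rw [adjugate_eq hg hp, pd_gsymm hU hg hp ν j]
  ring

omit hU hp in
theorem adet_pos' (y : Pt) (hy : y ∈ U) : 0 < adet g y := abs_pos.mpr (hg.det_ne y hy)

theorem adet_ev : (fun y => adet g y)
    =ᶠ[nhds p] (fun y => (if 0 < (g p).det then (1:ℝ) else -1) * (g y).det) := by
  have hcont := (ddet hU hg hp).continuousAt
  rcases lt_or_gt_of_ne (hg.det_ne p hp) with hneg | hpos
  · filter_upwards [hcont (Iio_mem_nhds hneg)] with y hy
    simp only [adet, Set.mem_preimage, Set.mem_Iio] at hy ⊢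
    rw [abs_of_neg hy, if_neg (not_lt.mpr hneg.le)]; ring
  · filter_upwards [hcont (Ioi_mem_nhds hpos)] with y hy
    simp only [adet, Set.mem_preimage, Set.mem_Ioi] at hy ⊢
    rw [abs_of_pos hy, if_pos hpos]; ring

theorem cdet_eq : (if 0 < (g p).det then (1:ℝ) else -1) * (g p).det = adet g p :=
  ((adet_ev hU hg hp).eq_of_nhds).symm

theorem dD : DifferentiableAt ℝ (fun y => Real.sqrt (adet g y)) p := by
  have h1 : DifferentiableAt ℝ
      (fun y => Real.sqrt ((if 0 < (g p).det then (1:ℝ) else -1) * (g y).det)) p := by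
    refine diffAt_sqrt ((ddet hU hg hp).const_mul _) ?_
    show (if 0 < (g p).det then (1:ℝ) else -1) * (g p).det ≠ 0
    rw [cdet_eq hU hg hp]
    exact (adet_pos' hg p hp).ne'
  exact h1.congr_of_eventuallyEq ((adet_ev hU hg hp).fun_comp Real.sqrt)

theorem pd_D : pd γ (fun y => Real.sqrt (adet g y)) p
    = (1/2) * Real.sqrt (adet g p)
      * ∑ μ : Fin 4, ∑ ν : Fin 4, ginv g p μ ν * pd γ (fun y => g y μ ν) p := by
  have h1 : pd γ (fun y => Real.sqrt (adet g y)) p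
      = pd γ (fun y => Real.sqrt ((if 0 < (g p).det then (1:ℝ) else -1) * (g y).det)) p :=
    pd_congr_nhds ((adet_ev hU hg hp).fun_comp Real.sqrt)
  have hc0 : (if 0 < (g p).det then (1:ℝ) else -1) * (g p).det ≠ 0 := by
    rw [cdet_eq hU hg hp]; exact (adet_pos' hg p hp).ne'
  rw [h1, pd_sqrt ((ddet hU hg hp).const_mul _) hc0,
    pd_const_mul _ (ddet hU hg hp), pd_det_tr hU hg hp]
  have h2 : (if 0 < (g p).det then (1:ℝ) else -1)
        * ((g p).det * ∑ μ : Fin 4, ∑ ν : Fin 4, ginv g p μ ν * pd γ (fun y => g y μ ν) p)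
      = adet g p * ∑ μ : Fin 4, ∑ ν : Fin 4, ginv g p μ ν * pd γ (fun y => g y μ ν) p := by
    rw [← cdet_eq hU hg hp]; ring
  rw [h2, cdet_eq hU hg hp]
  have h3 : adet g p = Real.sqrt (adet g p) ^ 2 :=
    (Real.sq_sqrt (adet_pos' hg p hp).le).symm
  have h4 : Real.sqrt (adet g p) ≠ 0 := (Real.sqrt_pos.mpr (adet_pos' hg p hp)).ne'
  rw [h3]
  field_simp
  rw [← h3, ← h3]
  ring
end Metric
section Tensor
variable {U : Set Pt} {g : Pt → Matrix (Fin 4) (Fin 4) ℝ} {p : Pt} {X : Fin 4 → Pt → ℝ}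
variable (hU : IsOpen U) (hg : IsMetricOn g U) (hp : p ∈ U)

include hg hp in
theorem contract1 (β : Fin 4) (v : Fin 4 → ℝ) :
    ∑ b : Fin 4, ginv g p β b * ∑ c : Fin 4, g p c b * v c = v β := by
  have e : ∀ b : Fin 4, ginv g p β b * ∑ c : Fin 4, g p c b * v c
      = ∑ c : Fin 4, ginv g p β b * g p b c * v c := by
    intro b
    rw [Finset.mul_sum]
    refine Finset.sum_congr rfl fun c _ => ?_
    rw [hg.symm p hp c b]; ring
  rw [Finset.sum_congr rfl fun b _ => e b, Finset.sum_comm]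
  have e2 : ∀ c : Fin 4, ∑ b : Fin 4, ginv g p β b * g p b c * v c
      = (if β = c then 1 else 0) * v c := by
    intro c; rw [← Finset.sum_mul, FmulG hg p hp β c]
  rw [Finset.sum_congr rfl fun c _ => e2 c]
  simp

include hg hp in
theorem contract2 (α : Fin 4) (v : Fin 4 → ℝ) :
    ∑ a : Fin 4, ginv g p α a * ∑ c : Fin 4, g p a c * v c = v α := by
  have e : ∀ a : Fin 4, ginv g p α a * ∑ c : Fin 4, g p a c * v c
      = ∑ c : Fin 4, ginv g p α a * g p a c * v c := by
    intro a; rw [Finset.mul_sum]; exact Finset.sum_congr rfl fun c _ => by ring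
  rw [Finset.sum_congr rfl fun a _ => e a, Finset.sum_comm]
  have e2 : ∀ c : Fin 4, ∑ a : Fin 4, ginv g p α a * g p a c * v c
      = (if α = c then 1 else 0) * v c := by
    intro c; rw [← Finset.sum_mul, FmulG hg p hp α c]
  rw [Finset.sum_congr rfl fun c _ => e2 c]
  simp

include hU hg hp in
theorem lieF (hX : ∀ a, DifferentiableAt ℝ (X a) p) (α β : Fin 4) :
    lieT X (fun y => ginv g y) p α β = - piUp g X p α β := by
  simp only [lieT, piUp]
  -- split piLow
  have split : ∀ a b : Fin 4, ginv g p α a * ginv g p β b * piLow g X p a b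
      = ginv g p α a * ginv g p β b * (∑ c : Fin 4, X c p * pd c (fun y => g y a b) p)
        + ginv g p α a * ginv g p β b * (∑ c : Fin 4, g p c b * pd a (X c) p)
        + ginv g p α a * ginv g p β b * (∑ c : Fin 4, g p a c * pd b (X c) p) := by
    intro a b; rw [piLow]; ring
  rw [Finset.sum_congr rfl fun a _ => Finset.sum_congr rfl fun b _ => split a b]
  simp only [Finset.sum_add_distrib]
  -- Part 1
  have e1 : ∀ c : Fin 4, X c p * pd c (fun y => ginv g y α β) p
      = ∑ a : Fin 4, ∑ b : Fin 4,
          -(ginv g p α a * ginv g p β b * (X c p * pd c (fun y => g y a b) p)) := by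
    intro c
    rw [pd_ginv hU hg hp, mul_neg]
    have e : X c p * ∑ a : Fin 4, ∑ b : Fin 4,
          ginv g p α a * pd c (fun y => g y a b) p * ginv g p b β
        = ∑ a : Fin 4, ∑ b : Fin 4,
          ginv g p α a * ginv g p β b * (X c p * pd c (fun y => g y a b) p) := by
      rw [Finset.mul_sum]
      refine Finset.sum_congr rfl fun a _ => ?_
      rw [Finset.mul_sum]
      refine Finset.sum_congr rfl fun b _ => ?_
      rw [Fsymm hg hp b β]; ring
    rw [e]
    simp only [← Finset.sum_neg_distrib]
  have P1 : ∑ a : Fin 4, ∑ b : Fin 4, ginv g p α a * ginv g p β b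
        * (∑ c : Fin 4, X c p * pd c (fun y => g y a b) p)
      = -∑ c : Fin 4, X c p * pd c (fun y => ginv g y α β) p := by
    rw [Finset.sum_congr rfl fun c (_ : c ∈ Finset.univ) => e1 c]
    simp only [Finset.sum_neg_distrib, neg_neg]
    rw [Finset.sum_congr rfl fun a (_ : a ∈ Finset.univ) =>
      Finset.sum_congr rfl fun b (_ : b ∈ Finset.univ) =>
        (Finset.mul_sum Finset.univ (fun c => X c p * pd c (fun y => g y a b) p)
          (ginv g p α a * ginv g p β b))]
    rw [Finset.sum_congr rfl fun a (_ : a ∈ Finset.univ) => Finset.sum_comm]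
    rw [Finset.sum_comm]
  -- Part 2
  have P2 : ∑ a : Fin 4, ∑ b : Fin 4, ginv g p α a * ginv g p β b
        * (∑ c : Fin 4, g p c b * pd a (X c) p)
      = ∑ c : Fin 4, ginv g p α c * pd c (X β) p := by
    refine Finset.sum_congr rfl fun a _ => ?_
    have e : ∑ b : Fin 4, ginv g p α a * ginv g p β b * (∑ c : Fin 4, g p c b * pd a (X c) p)
        = ginv g p α a * ∑ b : Fin 4, ginv g p β b * (∑ c : Fin 4, g p c b * pd a (X c) p) := by
      rw [Finset.mul_sum]
      exact Finset.sum_congr rfl fun b _ => by ring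
    rw [e, contract1 hg hp β (fun c => pd a (X c) p)]
  -- Part 3
  have P3 : ∑ a : Fin 4, ∑ b : Fin 4, ginv g p α a * ginv g p β b
        * (∑ c : Fin 4, g p a c * pd b (X c) p)
      = ∑ c : Fin 4, ginv g p β c * pd c (X α) p := by
    rw [Finset.sum_comm]
    refine Finset.sum_congr rfl fun b _ => ?_
    have e : ∑ a : Fin 4, ginv g p α a * ginv g p β b * (∑ c : Fin 4, g p a c * pd b (X c) p)
        = ginv g p β b * ∑ a : Fin 4, ginv g p α a * (∑ c : Fin 4, g p a c * pd b (X c) p) := by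
      rw [Finset.mul_sum]
      exact Finset.sum_congr rfl fun a _ => by ring
    rw [e, contract2 hg hp α (fun c => pd b (X c) p)]
  rw [P1, P2, P3]
  have hswap : ∑ c : Fin 4, ginv g p c β * pd c (X α) p
      = ∑ c : Fin 4, ginv g p β c * pd c (X α) p :=
    Finset.sum_congr rfl fun c _ => by rw [Fsymm hg hp c β]
  rw [hswap]
  ring

include hU hg hp in
theorem trace_piUp (hX : ∀ a, DifferentiableAt ℝ (X a) p) :
    ∑ c : Fin 4, ∑ d : Fin 4, g p c d * piUp g X p c d
      = (∑ a : Fin 4, ∑ b : Fin 4, ginv g p a b * ∑ c : Fin 4, X c p * pd c (fun y => g y a b) p)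
        + 2 * ∑ c : Fin 4, pd c (X c) p := by
  -- w c b = ∑ a F c a * piLow a b
  have hw : ∀ c d : Fin 4, piUp g X p c d
      = ∑ b : Fin 4, ginv g p d b * (∑ a : Fin 4, ginv g p c a * piLow g X p a b) := by
    intro c d
    rw [piUp, Finset.sum_comm]
    refine Finset.sum_congr rfl fun b _ => ?_
    rw [Finset.mul_sum]
    exact Finset.sum_congr rfl fun a _ => by ring
  have step1 : ∑ c : Fin 4, ∑ d : Fin 4, g p c d * piUp g X p c d
      = ∑ c : Fin 4, ∑ a : Fin 4, ginv g p c a * piLow g X p a c := by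
    refine Finset.sum_congr rfl fun c _ => ?_
    have e : ∀ d : Fin 4, g p c d * piUp g X p c d
        = ∑ b : Fin 4, (g p c d * ginv g p d b) * (∑ a : Fin 4, ginv g p c a * piLow g X p a b) := by
      intro d
      rw [hw c d, Finset.mul_sum]
      exact Finset.sum_congr rfl fun b _ => by ring
    rw [Finset.sum_congr rfl fun d (_ : d ∈ Finset.univ) => e d, Finset.sum_comm]
    have e2 : ∀ b : Fin 4, ∑ d : Fin 4, (g p c d * ginv g p d b)
          * (∑ a : Fin 4, ginv g p c a * piLow g X p a b)
        = (if c = b then 1 else 0) * (∑ a : Fin 4, ginv g p c a * piLow g X p a b) := by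
      intro b; rw [← Finset.sum_mul, gmulF hg p hp c b]
    rw [Finset.sum_congr rfl fun b _ => e2 b]
    simp
  rw [step1]
  -- split piLow
  have split : ∀ c a : Fin 4, ginv g p c a * piLow g X p a c
      = ginv g p c a * (∑ γ : Fin 4, X γ p * pd γ (fun y => g y a c) p)
        + ginv g p c a * (∑ γ : Fin 4, g p γ c * pd a (X γ) p)
        + ginv g p c a * (∑ γ : Fin 4, g p a γ * pd c (X γ) p) := by
    intro c a; rw [piLow]; ring
  rw [Finset.sum_congr rfl fun c (_ : c ∈ Finset.univ) =>
    Finset.sum_congr rfl fun a (_ : a ∈ Finset.univ) => split c a]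
  simp only [Finset.sum_add_distrib]
  -- piece 1: rename and symmetrize
  have Q1 : ∑ c : Fin 4, ∑ a : Fin 4, ginv g p c a
        * (∑ γ : Fin 4, X γ p * pd γ (fun y => g y a c) p)
      = ∑ a : Fin 4, ∑ b : Fin 4, ginv g p a b * ∑ c : Fin 4, X c p * pd c (fun y => g y a b) p := by
    refine Finset.sum_congr rfl fun a _ => Finset.sum_congr rfl fun b _ => ?_
    have : ∑ γ : Fin 4, X γ p * pd γ (fun y => g y b a) p
        = ∑ γ : Fin 4, X γ p * pd γ (fun y => g y a b) p :=
      Finset.sum_congr rfl fun γ _ => by rw [pd_gsymm hU hg hp b a]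
    rw [this]
  -- piece 2
  have Q2 : ∑ c : Fin 4, ∑ a : Fin 4, ginv g p c a * (∑ γ : Fin 4, g p γ c * pd a (X γ) p)
      = ∑ a : Fin 4, pd a (X a) p := by
    rw [Finset.sum_comm]
    refine Finset.sum_congr rfl fun a _ => ?_
    have e : ∀ c : Fin 4, ginv g p c a * (∑ γ : Fin 4, g p γ c * pd a (X γ) p)
        = ginv g p a c * (∑ γ : Fin 4, g p γ c * pd a (X γ) p) := by
      intro c; rw [Fsymm hg hp c a]
    rw [Finset.sum_congr rfl fun c _ => e c, contract1 hg hp a (fun γ => pd a (X γ) p)]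
  -- piece 3
  have Q3 : ∑ c : Fin 4, ∑ a : Fin 4, ginv g p c a * (∑ γ : Fin 4, g p a γ * pd c (X γ) p)
      = ∑ c : Fin 4, pd c (X c) p := by
    refine Finset.sum_congr rfl fun c _ => ?_
    rw [contract2 hg hp c (fun γ => pd c (X γ) p)]
  rw [Q1, Q2, Q3]
  ring
end Tensor
section Final
variable {U : Set Pt} {g : Pt → Matrix (Fin 4) (Fin 4) ℝ} {p : Pt} {X : Fin 4 → Pt → ℝ}
variable (hU : IsOpen U) (hg : IsMetricOn g U) (hp : p ∈ U)

theorem dhmat (a b : Fin 4) : DifferentiableAt ℝ (fun y => hmat y a b) p := by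
  by_cases ha : a = 0 <;> by_cases hb : b = 0
  · simp only [hmat, ha, hb, if_true, if_pos rfl]
    exact differentiableAt_const _
  · simp only [hmat, ha, hb, if_true, if_false, if_pos rfl, if_neg hb]
    have e : (fun y : Pt => -(y b / tauX y)) = fun y => -(y b * (tauX y)⁻¹) := by
      funext y; rw [div_eq_mul_inv]
    rw [e]
    exact ((dproj b).mul (diffAt_inv dtau tau_pos.ne')).neg
  · simp only [hmat, ha, hb, if_true, if_false, if_pos rfl, if_neg ha]
    have e : (fun y : Pt => -(y a / tauX y)) = fun y => -(y a * (tauX y)⁻¹) := by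
      funext y; rw [div_eq_mul_inv]
    rw [e]
    exact ((dproj a).mul (diffAt_inv dtau tau_pos.ne')).neg
  · simp only [hmat, ha, hb, if_false, if_neg ha, if_neg hb]
    by_cases hab : a = b
    · simp only [hab, if_pos rfl]; exact differentiableAt_const _
    · simp only [hab, if_neg hab, if_false]; exact differentiableAt_const _

include hU hg hp in
theorem lieT_split (α β : Fin 4) :
    lieT X (Mten g) p α β
      = lieT X (fun y a b => Real.sqrt (adet g y) * ginv g y a b) p α β
        - lieT X hmat p α β := by
  simp only [lieT, Mten]
  have e : ∀ c : Fin 4, pd c (fun y => Real.sqrt (adet g y) * ginv g y α β - hmat y α β) p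
      = pd c (fun y => Real.sqrt (adet g y) * ginv g y α β) p
        - pd c (fun y => hmat y α β) p :=
    fun c => pd_sub ((dD hU hg hp).mul (dginv hU hg hp α β)) (dhmat α β)
  rw [Finset.sum_congr rfl fun c (_ : c ∈ Finset.univ) => by rw [e c]]
  simp only [mul_sub, sub_mul, Finset.sum_sub_distrib]
  ring

include hU hg hp in
theorem lieT_prod (hX : ∀ a, DifferentiableAt ℝ (X a) p) (α β : Fin 4) :
    lieT X (fun y a b => Real.sqrt (adet g y) * ginv g y a b) p α β
      = (∑ c : Fin 4, X c p * pd c (fun y => Real.sqrt (adet g y)) p) * ginv g p α β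
        + Real.sqrt (adet g p) * lieT X (fun y => ginv g y) p α β := by
  simp only [lieT]
  have e : ∀ c : Fin 4, pd c (fun y => Real.sqrt (adet g y) * ginv g y α β) p
      = pd c (fun y => Real.sqrt (adet g y)) p * ginv g p α β
        + Real.sqrt (adet g p) * pd c (fun y => ginv g y α β) p :=
    fun c => pd_mul (dD hU hg hp) (dginv hU hg hp α β)
  rw [Finset.sum_congr rfl fun c (_ : c ∈ Finset.univ) => by rw [e c]]
  simp only [mul_add, Finset.sum_add_distrib]
  have h1 : ∑ c : Fin 4, X c p * (pd c (fun y => Real.sqrt (adet g y)) p * ginv g p α β)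
      = (∑ c : Fin 4, X c p * pd c (fun y => Real.sqrt (adet g y)) p) * ginv g p α β := by
    rw [Finset.sum_mul]; exact Finset.sum_congr rfl fun c _ => by ring
  have h2 : ∑ c : Fin 4, X c p * (Real.sqrt (adet g p) * pd c (fun y => ginv g y α β) p)
      = Real.sqrt (adet g p) * ∑ c : Fin 4, X c p * pd c (fun y => ginv g y α β) p := by
    rw [Finset.mul_sum]; exact Finset.sum_congr rfl fun c _ => by ring
  have h3 : ∑ c : Fin 4, Real.sqrt (adet g p) * ginv g p c β * pd c (X α) p
      = Real.sqrt (adet g p) * ∑ c : Fin 4, ginv g p c β * pd c (X α) p := by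
    rw [Finset.mul_sum]; exact Finset.sum_congr rfl fun c _ => by ring
  have h4 : ∑ c : Fin 4, Real.sqrt (adet g p) * ginv g p α c * pd c (X β) p
      = Real.sqrt (adet g p) * ∑ c : Fin 4, ginv g p α c * pd c (X β) p := by
    rw [Finset.mul_sum]; exact Finset.sum_congr rfl fun c _ => by ring
  rw [h1, h2, h3, h4]
  ring

include hU hg hp in
theorem XD_eq (hX : ∀ a, DifferentiableAt ℝ (X a) p) :
    (∑ c : Fin 4, X c p * pd c (fun y => Real.sqrt (adet g y)) p)
      = (1/2) * Real.sqrt (adet g p)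
        * ∑ a : Fin 4, ∑ b : Fin 4, ginv g p a b * ∑ c : Fin 4, X c p * pd c (fun y => g y a b) p := by
  have e : ∀ c : Fin 4, X c p * pd c (fun y => Real.sqrt (adet g y)) p
      = ∑ a : Fin 4, ∑ b : Fin 4, (1/2) * Real.sqrt (adet g p)
          * (ginv g p a b * (X c p * pd c (fun y => g y a b) p)) := by
    intro c
    rw [pd_D hU hg hp]
    rw [show X c p * (1/2 * Real.sqrt (adet g p)
        * ∑ a : Fin 4, ∑ b : Fin 4, ginv g p a b * pd c (fun y => g y a b) p)
      = (X c p * (1/2 * Real.sqrt (adet g p)))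
        * ∑ a : Fin 4, ∑ b : Fin 4, ginv g p a b * pd c (fun y => g y a b) p from by ring]
    rw [Finset.mul_sum]
    refine Finset.sum_congr rfl fun a _ => ?_
    rw [Finset.mul_sum]
    exact Finset.sum_congr rfl fun b _ => by ring
  rw [Finset.sum_congr rfl fun c (_ : c ∈ Finset.univ) => e c]
  have L : ∑ c : Fin 4, ∑ a : Fin 4, ∑ b : Fin 4, (1/2) * Real.sqrt (adet g p)
        * (ginv g p a b * (X c p * pd c (fun y => g y a b) p))
      = ∑ a : Fin 4, ∑ b : Fin 4, ∑ c : Fin 4, (1/2) * Real.sqrt (adet g p)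
        * (ginv g p a b * (X c p * pd c (fun y => g y a b) p)) := by
    rw [Finset.sum_comm]
    exact Finset.sum_congr rfl fun a _ => Finset.sum_comm
  have R : (1/2) * Real.sqrt (adet g p)
        * ∑ a : Fin 4, ∑ b : Fin 4, ginv g p a b * ∑ c : Fin 4, X c p * pd c (fun y => g y a b) p
      = ∑ a : Fin 4, ∑ b : Fin 4, ∑ c : Fin 4, (1/2) * Real.sqrt (adet g p)
        * (ginv g p a b * (X c p * pd c (fun y => g y a b) p)) := by
    rw [Finset.mul_sum]
    refine Finset.sum_congr rfl fun a _ => ?_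
    rw [Finset.mul_sum]
    refine Finset.sum_congr rfl fun b _ => ?_
    rw [show (1/2) * Real.sqrt (adet g p)
        * (ginv g p a b * ∑ c : Fin 4, X c p * pd c (fun y => g y a b) p)
      = ((1/2) * Real.sqrt (adet g p) * ginv g p a b)
        * ∑ c : Fin 4, X c p * pd c (fun y => g y a b) p from by ring]
    rw [Finset.mul_sum]
    exact Finset.sum_congr rfl fun c _ => by ring
  rw [L, R]
end Final
/-- the Bondi-coordinate formula
`π̂ + 2X(lnΩ)g⁻¹ = -d^{-1/2}(L_X h + (Div X) h) + R` with `Ω = τ_x`. -/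
theorem hatPi_bondi_formula
    (U : Set Pt) (hU : IsOpen U)
    (hU0 : ∀ p ∈ U, ∃ i : Fin 3, p i.succ ≠ 0)
    (g : Pt → Matrix (Fin 4) (Fin 4) ℝ) (hg : IsMetricOn g U)
    (X : Fin 4 → Pt → ℝ) (hX : ∀ α, ContDiffOn ℝ (⊤ : ℕ∞) (X α) U) :
    ∀ p ∈ U, ∀ α β : Fin 4,
      hatPi g X p α β + 2 * Xapp X (fun y => Real.log (tauX y)) p * ginv g p α β
        = -((Real.sqrt (adet g p))⁻¹ * (lieT X hmat p α β + divB X p * hmat p α β))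
          + Rrem g X p α β := by
  intro p hp α β
  have hXd : ∀ a, DifferentiableAt ℝ (X a) p :=
    fun a => ((hX a).contDiffAt (hU.mem_nhds hp)).differentiableAt (by simp)
  obtain ⟨i0, hi0⟩ := hU0 p hp
  have hq : (∑ i : Fin 3, (p i.succ)^2) ≠ 0 :=
    (Finset.sum_pos' (fun j _ => sq_nonneg _) ⟨i0, Finset.mem_univ i0, by positivity⟩).ne'
  have hr : rB p ≠ 0 := (rB_pos hq).ne'
  have ht : tauX p ≠ 0 := tau_pos.ne'
  have hD0 : Real.sqrt (adet g p) ≠ 0 := (Real.sqrt_pos.mpr (adet_pos' hg p hp)).ne'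
  have hsplit := lieT_split hU hg hp (X := X) α β
  have hprod := lieT_prod hU hg hp hXd α β
  have hlf := lieF hU hg hp hXd α β
  have hXD := XD_eq hU hg hp hXd
  have hT := trace_piUp hU hg hp hXd
  have hdiv := divB_eq hXd hq
  have hlog := Xapp_log_tau hXd
  have hτ2 : tauX p ^ 2 = 1 + rB p ^ 2 := by rw [tau_sq, rB_sq]
  have hXr : Xrad X p = (rB p)⁻¹ * ∑ j : Fin 3, p j.succ * X j.succ p := rfl
  have hMt : Mten g p α β = Real.sqrt (adet g p) * ginv g p α β - hmat p α β := rfl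
  rw [hatPi, Rrem, hsplit, hprod, hlf, hXD, hT, hdiv, hlog, hXr, hMt, hτ2]
  have h1r : (1:ℝ) + rB p ^ 2 ≠ 0 := by positivity
  field_simp
  ring
end
end

section
/- Let C₀ ≥ 1, T ≥ 1, R ≥ 1, and let u : [0,T]×ℝ³ → ℝ be C¹ with C₀⁻¹ ≤ ∂_t u ≤ C₀ everywhere and ⟨u(t,x)⟩ ≤ C₀ T for all (t,x) ∈ [T/2,T]×{R/2<|x|<R} (this encodes the regime R ≲ T, since in the paper's setting u ≈ t−|x|). Write ∂_u^b φ = (∂_t u)⁻¹ ∂_t φ and ⟨u⟩ = (1+u²)^{1/2}. Then there is a constant C = C(C₀) such that for every smooth φ : [0,T]×ℝ³ → ℝ one has the weighted trace inequality ∫_{R/2<|x|<R} ⟨u(T,x)⟩ φ(T,x)² dx ≤ C ∫_{T/2}^{T} ∫_{R/2<|x|<R} ( ⟨u⟩² (∂_u^b φ)² + φ² ) dx dt. -/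
noncomputable section

open MeasureTheory

/-- Euclidean `ℝ³`. -/
abbrev E3 : Type := EuclideanSpace ℝ (Fin 3)

/-- The Japanese bracket `⟨x⟩ = (1+|x|²)^{1/2}`. -/
def jap (x : E3) : ℝ := Real.sqrt (1 + ‖x‖ ^ 2)

/-- The dyadic annulus `A_j = {2^j ≤ ⟨x⟩ < 2^{j+1}}`. -/
def Aj (j : ℕ) : Set E3 := {x | (2 : ℝ) ^ j ≤ jap x ∧ jap x < (2 : ℝ) ^ (j + 1)}

/-- The `L²` norm of `f` over the region `Q`. -/
def L2n (Q : Set E3) (f : E3 → ℝ) : ℝ := Real.sqrt (∫ x in Q, (f x) ^ 2)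

/-- `K` is a (smoothly bounded) domain: it is the sublevel set of a smooth
function whose differential does not vanish on the boundary. -/
def HasSmoothBoundary (K : Set E3) : Prop :=
  ∃ f : E3 → ℝ, ContDiff ℝ (⊤ : ℕ∞) f ∧ K = {x | f x ≤ 0} ∧
    ∀ x ∈ frontier K, fderiv ℝ f x ≠ 0

/-- `⟨s⟩ = (1+s²)^{1/2}` for a real number `s`. -/
def japR (s : ℝ) : ℝ := Real.sqrt (1 + s ^ 2)

/-- `∂_t u` at the spacetime point `(t,x)`. -/
def dtAt (u : ℝ × E3 → ℝ) (t : ℝ) (x : E3) : ℝ := deriv (fun s => u (s, x)) t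

lemma one_le_japR (s : ℝ) : 1 ≤ japR s := by
  have := Real.sqrt_le_sqrt (show (1:ℝ) ≤ 1 + s ^ 2 by nlinarith [sq_nonneg s])
  simpa [japR] using this

lemma abs_le_japR (s : ℝ) : |s| ≤ japR s := by
  rw [japR, ← Real.sqrt_sq_eq_abs]
  exact Real.sqrt_le_sqrt (by nlinarith)

lemma japR_pos (s : ℝ) : 0 < japR s := lt_of_lt_of_le one_pos (one_le_japR s)

lemma continuous_japR : Continuous japR :=
  Real.continuous_sqrt.comp (by continuity)

lemma hasDerivAt_japR (s : ℝ) : HasDerivAt japR (s / japR s) s := by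
  have h : HasDerivAt (fun s : ℝ => 1 + s ^ 2) (2 * s) s := by
    simpa using ((hasDerivAt_pow 2 s).const_add 1)
  have := h.sqrt (by positivity)
  convert this using 1
  · rfl
  rw [japR]; ring

lemma hasDerivAt_slice {f : ℝ × E3 → ℝ} (hf : Differentiable ℝ f) (t : ℝ) (x : E3) :
    HasDerivAt (fun s => f (s, x)) (fderiv ℝ f (t, x) (1, 0)) t := by
  have h1 : HasDerivAt (fun s : ℝ => (s, x)) ((1:ℝ), (0:E3)) t :=
    (hasDerivAt_id t).prodMk (hasDerivAt_const t x)
  exact (hf (t, x)).hasFDerivAt.comp_hasDerivAt t h1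

lemma continuous_slice_deriv {f : ℝ × E3 → ℝ} (hf : ContDiff ℝ 1 f) :
    Continuous (fun p : ℝ × E3 => fderiv ℝ f p (1, 0)) :=
  (hf.continuous_fderiv one_ne_zero).clm_apply continuous_const

lemma arith_aux (C₀ T J A P P' U : ℝ) (hC₀ : 1 ≤ C₀) (hT0 : 0 < T)
    (hA1 : C₀⁻¹ ≤ A) (hA2 : A ≤ C₀) (hJ1 : 1 ≤ J) (hJU : |U| ≤ J) (hJT : J ≤ C₀ * T) :
    2 / T * (J * P ^ 2) + |U * A / J * P ^ 2 + J * (2 * P * P')|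
      ≤ 5 * C₀ ^ 2 * (J ^ 2 * (A⁻¹ * P') ^ 2 + P ^ 2) := by
  have hC₀pos : (0:ℝ) < C₀ := lt_of_lt_of_le one_pos hC₀
  have hApos' : 0 < A := lt_of_lt_of_le (by positivity) hA1
  have hJpos : 0 < J := lt_of_lt_of_le one_pos hJ1
  have b1 : 2 / T * (J * P ^ 2) ≤ 2 * C₀ * P ^ 2 := by
    have h1 : J * P ^ 2 ≤ C₀ * T * P ^ 2 :=
      mul_le_mul_of_nonneg_right hJT (sq_nonneg _)
    have h2 : 2 / T * (J * P ^ 2) ≤ 2 / T * (C₀ * T * P ^ 2) :=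
      mul_le_mul_of_nonneg_left h1 (by positivity)
    calc 2 / T * (J * P ^ 2) ≤ 2 / T * (C₀ * T * P ^ 2) := h2
      _ = 2 * C₀ * P ^ 2 := by field_simp
  have b2 : |U * A / J * P ^ 2| ≤ C₀ * P ^ 2 := by
    have h1 : |U * A / J| ≤ C₀ := by
      rw [abs_div, abs_mul, abs_of_pos hApos', abs_of_pos hJpos, div_le_iff₀ hJpos]
      nlinarith
    rw [abs_mul, abs_pow, sq_abs]
    exact mul_le_mul_of_nonneg_right h1 (sq_nonneg _)
  have b3 : |J * (2 * P * P')| ≤ J ^ 2 * P' ^ 2 + P ^ 2 := by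
    have h1 : |J * (2 * P * P')| = 2 * (J * |P'|) * |P| := by
      rw [abs_mul, abs_of_pos hJpos, abs_mul, abs_mul, abs_two]
      ring
    have h2 := two_mul_le_add_sq (J * |P'|) |P|
    rw [h1]
    calc 2 * (J * |P'|) * |P| ≤ (J * |P'|) ^ 2 + |P| ^ 2 := h2
      _ = J ^ 2 * P' ^ 2 + P ^ 2 := by rw [mul_pow, sq_abs, sq_abs]
  have b4 : J ^ 2 * P' ^ 2 ≤ C₀ ^ 2 * (J ^ 2 * (A⁻¹ * P') ^ 2) := by
    have hPA : P' ^ 2 = A ^ 2 * (A⁻¹ * P') ^ 2 := by field_simp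
    rw [hPA]
    have hA2sq : A ^ 2 ≤ C₀ ^ 2 := by nlinarith
    calc J ^ 2 * (A ^ 2 * (A⁻¹ * P') ^ 2) = A ^ 2 * (J ^ 2 * (A⁻¹ * P') ^ 2) := by ring
      _ ≤ C₀ ^ 2 * (J ^ 2 * (A⁻¹ * P') ^ 2) :=
        mul_le_mul_of_nonneg_right hA2sq (by positivity)
  have habsg' : |U * A / J * P ^ 2 + J * (2 * P * P')|
      ≤ |U * A / J * P ^ 2| + |J * (2 * P * P')| := abs_add_le _ _
  have hC2 : C₀ ≤ C₀ ^ 2 := by nlinarith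
  have hXnn : (0:ℝ) ≤ J ^ 2 * (A⁻¹ * P') ^ 2 := by positivity
  nlinarith [b1, habsg', b2, b3, b4, sq_nonneg P, hXnn, hC2,
    mul_nonneg (sq_nonneg C₀) (sq_nonneg P),
    mul_le_mul_of_nonneg_right hC2 (sq_nonneg P),
    mul_le_mul_of_nonneg_right hC₀ (sq_nonneg P)]

/-- the weighted trace inequality
`∫_{R/2<|x|<R}⟨u(T)⟩φ(T)² dx ≤ C∫_{T/2}^T∫_{R/2<|x|<R}(⟨u⟩²(∂_u^bφ)² + φ²) dx dt`,
where `∂_u^bφ = (∂_t u)⁻¹ ∂_t φ`. -/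
theorem weighted_trace_inequality
    (C₀ : ℝ) (hC₀ : 1 ≤ C₀) :
    ∃ C : ℝ, 0 < C ∧ ∀ T R : ℝ, 1 ≤ T → 1 ≤ R →
      ∀ u : ℝ × E3 → ℝ, ContDiff ℝ 1 u →
      (∀ t : ℝ, t ∈ Set.Icc 0 T → ∀ x : E3,
        C₀⁻¹ ≤ dtAt u t x ∧ dtAt u t x ≤ C₀) →
      (∀ t : ℝ, t ∈ Set.Icc (T/2) T → ∀ x : E3, R/2 < ‖x‖ → ‖x‖ < R →
        japR (u (t, x)) ≤ C₀ * T) →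
      ∀ φ : ℝ × E3 → ℝ, ContDiff ℝ (⊤ : ℕ∞) φ →
        (∫ x in {x : E3 | R/2 < ‖x‖ ∧ ‖x‖ < R}, japR (u (T, x)) * (φ (T, x)) ^ 2)
          ≤ C * ∫ t in (T/2)..T, ∫ x in {x : E3 | R/2 < ‖x‖ ∧ ‖x‖ < R},
              ((japR (u (t, x))) ^ 2 *
                  ((dtAt u t x)⁻¹ * deriv (fun s => φ (s, x)) t) ^ 2
                + (φ (t, x)) ^ 2) := by
  have hC₀pos : (0:ℝ) < C₀ := lt_of_lt_of_le one_pos hC₀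
  refine ⟨5 * C₀ ^ 2, by positivity, ?_⟩
  intro T R hT hR u hu hu1 hu2 φ hφ
  have hT0 : (0:ℝ) < T := lt_of_lt_of_le one_pos hT
  set a : ℝ := T / 2 with ha_def
  have haT : a ≤ T := by rw [ha_def]; linarith
  have ha0 : (0:ℝ) ≤ a := by rw [ha_def]; linarith
  set S : Set E3 := {x : E3 | R/2 < ‖x‖ ∧ ‖x‖ < R} with hS_def
  have hSm : MeasurableSet S := by
    have : IsOpen S := by
      rw [hS_def, Set.setOf_and]
      exact (isOpen_lt continuous_const continuous_norm).inter
        (isOpen_lt continuous_norm continuous_const)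
    exact this.measurableSet
  have hSsub : S ⊆ Metric.closedBall (0:E3) R := by
    intro x hx
    rw [Metric.mem_closedBall, dist_zero_right]
    exact le_of_lt hx.2
  -- derivatives
  have hud : Differentiable ℝ u := hu.differentiable one_ne_zero
  have hφ1 : ContDiff ℝ 1 φ := hφ.of_le (by exact_mod_cast le_top)
  have hφd : Differentiable ℝ φ := hφ1.differentiable one_ne_zero
  set u' : ℝ × E3 → ℝ := fun p => fderiv ℝ u p (1, 0) with hu'_def
  set φ' : ℝ × E3 → ℝ := fun p => fderiv ℝ φ p (1, 0) with hφ'_def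
  have hU : ∀ (t : ℝ) (x : E3), HasDerivAt (fun s => u (s, x)) (u' (t, x)) t :=
    fun t x => hasDerivAt_slice hud t x
  have hΦ : ∀ (t : ℝ) (x : E3), HasDerivAt (fun s => φ (s, x)) (φ' (t, x)) t :=
    fun t x => hasDerivAt_slice hφd t x
  have hdt : ∀ (t : ℝ) (x : E3), dtAt u t x = u' (t, x) := fun t x => (hU t x).deriv
  have hdφ : ∀ (t : ℝ) (x : E3), deriv (fun s => φ (s, x)) t = φ' (t, x) :=
    fun t x => (hΦ t x).deriv
  have hu'c : Continuous u' := continuous_slice_deriv hu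
  have hφ'c : Continuous φ' := continuous_slice_deriv hφ1
  set W : ℝ × E3 → ℝ :=
    fun p => japR (u p) ^ 2 * ((u' p)⁻¹ * φ' p) ^ 2 + (φ p) ^ 2 with hW_def
  have hgoal_eq : ∀ (t : ℝ) (x : E3),
      (japR (u (t, x))) ^ 2 * ((dtAt u t x)⁻¹ * deriv (fun s => φ (s, x)) t) ^ 2
        + (φ (t, x)) ^ 2 = W (t, x) := by
    intro t x
    rw [hdt t x, hdφ t x]
  simp only [hgoal_eq]
  -- bounds on u' on the strip
  have hA : ∀ t ∈ Set.Icc a T, ∀ x : E3, C₀⁻¹ ≤ u' (t, x) ∧ u' (t, x) ≤ C₀ := by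
    intro t ht x
    have := hu1 t ⟨le_trans ha0 ht.1, ht.2⟩ x
    rwa [hdt t x] at this
  have hApos : ∀ t ∈ Set.Icc a T, ∀ x : E3, 0 < u' (t, x) := by
    intro t ht x
    exact lt_of_lt_of_le (by positivity) (hA t ht x).1
  -- continuity of W on the strip
  have hWcont : ContinuousOn W (Set.Icc a T ×ˢ Metric.closedBall (0:E3) R) := by
    have hinv : ContinuousOn (fun p : ℝ × E3 => (u' p)⁻¹)
        (Set.Icc a T ×ˢ Metric.closedBall (0:E3) R) := by
      apply ContinuousOn.inv₀ hu'c.continuousOn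
      intro p hp
      have := hApos p.1 hp.1 p.2
      exact ne_of_gt this
    have h1 : Continuous (fun p : ℝ × E3 => japR (u p) ^ 2) :=
      (continuous_japR.comp hu.continuous).pow 2
    have h2 : Continuous (fun p : ℝ × E3 => (φ p) ^ 2) := (hφ1.continuous).pow 2
    exact ((h1.continuousOn.mul ((hinv.mul hφ'c.continuousOn).pow 2)).add h2.continuousOn)
  have hWint : IntegrableOn W (Set.Ioc a T ×ˢ S) := by
    apply IntegrableOn.mono_set
      (hWcont.integrableOn_compact (isCompact_Icc.prod (isCompact_closedBall _ _)))
    exact Set.prod_mono Set.Ioc_subset_Icc_self hSsub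
  have hprod : Integrable W ((volume.restrict (Set.Ioc a T)).prod (volume.restrict S)) := by
    rw [Measure.prod_restrict, ← Measure.volume_eq_prod]
    exact hWint
  have hswapint : Integrable (Function.uncurry fun (x : E3) (t : ℝ) => W (t, x))
      ((volume.restrict S).prod (volume.restrict (Set.Ioc a T))) := by
    have := hprod.swap
    exact this
  -- the per-x estimate
  have keyx : ∀ x ∈ S, japR (u (T, x)) * (φ (T, x)) ^ 2
      ≤ ∫ t in Set.Ioc a T, 5 * C₀ ^ 2 * W (t, x) := by
    intro x hx
    rw [← intervalIntegral.integral_of_le haT]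
    have hιc : Continuous (fun t : ℝ => ((t : ℝ), x)) := continuous_id.prodMk continuous_const
    set g : ℝ → ℝ := fun t => japR (u (t, x)) * (φ (t, x)) ^ 2 with hg_def
    set g' : ℝ → ℝ := fun t =>
      (u (t, x) * u' (t, x) / japR (u (t, x))) * (φ (t, x)) ^ 2
        + japR (u (t, x)) * (2 * φ (t, x) * φ' (t, x)) with hg'_def
    have hg : ∀ t, HasDerivAt g (g' t) t := by
      intro t
      have hJ : HasDerivAt (fun s => japR (u (s, x)))
          (u (t, x) * u' (t, x) / japR (u (t, x))) t := by
        have := (hasDerivAt_japR (u (t, x))).comp t (hU t x)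
        exact this.congr_deriv (by ring)
      have hP : HasDerivAt (fun s => (φ (s, x)) ^ 2) (2 * φ (t, x) * φ' (t, x)) t := by
        have := (hΦ t x).pow 2
        exact this.congr_deriv (by norm_num)
      exact hJ.mul hP
    have hgc : Continuous g :=
      (continuous_japR.comp (hu.continuous.comp hιc)).mul ((hφ1.continuous.comp hιc).pow 2)
    have hg'c : Continuous g' := by
      have hden : Continuous (fun t : ℝ => japR (u (t, x))) :=
        continuous_japR.comp (hu.continuous.comp hιc)
      have h1 : Continuous (fun t : ℝ => u (t, x) * u' (t, x) / japR (u (t, x))) :=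
        ((hu.continuous.comp hιc).mul (hu'c.comp hιc)).div hden
          (fun t => ne_of_gt (japR_pos _))
      have h2 : Continuous (fun t : ℝ => (φ (t, x)) ^ 2) := (hφ1.continuous.comp hιc).pow 2
      have h3 : Continuous (fun t : ℝ => 2 * φ (t, x) * φ' (t, x)) :=
        (continuous_const.mul (hφ1.continuous.comp hιc)).mul (hφ'c.comp hιc)
      exact (h1.mul h2).add (hden.mul h3)
    set K : ℝ := ∫ t in a..T, |g' t| with hK_def
    have habs_int : ∀ c d : ℝ, IntervalIntegrable (fun t => |g' t|) volume c d :=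
      fun c d => hg'c.abs.intervalIntegrable c d
    have step1 : ∀ s ∈ Set.Icc a T, g T ≤ g s + K := by
      intro s hs
      have hftc : ∫ t in s..T, g' t = g T - g s :=
        intervalIntegral.integral_eq_sub_of_hasDerivAt (fun t _ => hg t)
          (hg'c.intervalIntegrable s T)
      have h1 : ∫ t in s..T, g' t ≤ ∫ t in s..T, |g' t| := by
        apply intervalIntegral.integral_mono hs.2 (hg'c.intervalIntegrable s T)
          (habs_int s T)
        intro t; exact le_abs_self _
      have h2 : (∫ t in a..s, |g' t|) + ∫ t in s..T, |g' t| = K :=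
        intervalIntegral.integral_add_adjacent_intervals (habs_int a s) (habs_int s T)
      have h3 : 0 ≤ ∫ t in a..s, |g' t| :=
        intervalIntegral.integral_nonneg hs.1 (fun t _ => abs_nonneg _)
      linarith
    have hKint : 0 ≤ K := by
      rw [hK_def]
      exact intervalIntegral.integral_nonneg haT (fun t _ => abs_nonneg _)
    have step2 : g T ≤ 2 / T * (∫ s in a..T, g s) + K := by
      have hmono : ∫ s in a..T, g T ≤ ∫ s in a..T, (g s + K) := by
        apply intervalIntegral.integral_mono_on haT intervalIntegrable_const
          ((hgc.intervalIntegrable a T).add intervalIntegrable_const) step1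
      rw [intervalIntegral.integral_const,
        intervalIntegral.integral_add (hgc.intervalIntegrable a T) intervalIntegrable_const,
        intervalIntegral.integral_const] at hmono
      have hTa : T - a = T / 2 := by rw [ha_def]; ring
      rw [hTa] at hmono
      simp only [smul_eq_mul] at hmono
      have h2T : (0:ℝ) < T / 2 := by linarith
      have hTne : T ≠ 0 := ne_of_gt hT0
      have hmul := mul_le_mul_of_nonneg_left hmono (le_of_lt (show (0:ℝ) < 2 / T by positivity))
      have e1 : 2 / T * (T / 2 * g T) = g T := by field_simp
      have e2 : 2 / T * ((∫ (x : ℝ) in a..T, g x) + T / 2 * K)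
          = 2 / T * (∫ (x : ℝ) in a..T, g x) + K := by field_simp
      rw [e1, e2] at hmul
      exact hmul
    -- pointwise bound
    have step3 : ∀ t ∈ Set.Icc a T, 2 / T * g t + |g' t| ≤ 5 * C₀ ^ 2 * W (t, x) := by
      intro t ht
      obtain ⟨hA1, hA2⟩ := hA t ht x
      simp only [hg_def, hg'_def, hW_def]
      exact arith_aux C₀ T _ _ _ _ _ hC₀ hT0 hA1 hA2 (one_le_japR _) (abs_le_japR _)
        (hu2 t ht x hx.1 hx.2)
    -- integrate step3
    have hWxc : ContinuousOn (fun t => W (t, x)) (Set.Icc a T) :=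
      hWcont.comp hιc.continuousOn (fun t ht => Set.mk_mem_prod ht (hSsub hx))
    have hWx_int : IntervalIntegrable (fun t => 5 * C₀ ^ 2 * W (t, x)) volume a T := by
      apply ContinuousOn.intervalIntegrable
      rw [Set.uIcc_of_le haT]
      exact continuousOn_const.mul hWxc
    have hlhs_int : IntervalIntegrable (fun t => 2 / T * g t + |g' t|) volume a T :=
      ((continuous_const.mul hgc).add hg'c.abs).intervalIntegrable a T
    have step4 : 2 / T * (∫ s in a..T, g s) + K ≤ ∫ t in a..T, 5 * C₀ ^ 2 * W (t, x) := by
      have heq : ∫ t in a..T, (2 / T * g t + |g' t|)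
          = 2 / T * (∫ s in a..T, g s) + K := by
        rw [intervalIntegral.integral_add (f := fun t => 2 / T * g t) ((continuous_const.mul hgc).intervalIntegrable a T)
          (habs_int a T), intervalIntegral.integral_const_mul]
      rw [← heq]
      exact intervalIntegral.integral_mono_on haT hlhs_int hWx_int step3
    calc japR (u (T, x)) * (φ (T, x)) ^ 2 = g T := rfl
      _ ≤ 2 / T * (∫ s in a..T, g s) + K := step2
      _ ≤ ∫ t in a..T, 5 * C₀ ^ 2 * W (t, x) := step4
  -- integrate keyx over S and apply Fubini
  have hint1 : IntegrableOn (fun x => japR (u (T, x)) * (φ (T, x)) ^ 2) S := by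
    have hc : Continuous (fun x : E3 => japR (u (T, x)) * (φ (T, x)) ^ 2) := by
      have hι : Continuous (fun x : E3 => ((T : ℝ), x)) := continuous_const.prodMk continuous_id
      exact (continuous_japR.comp (hu.continuous.comp hι)).mul ((hφ1.continuous.comp hι).pow 2)
    exact (hc.continuousOn.integrableOn_compact (isCompact_closedBall _ _)).mono_set hSsub
  have hint2 : IntegrableOn (fun x => ∫ t in Set.Ioc a T, 5 * C₀ ^ 2 * W (t, x)) S := by
    have h1 : Integrable (fun x : E3 => ∫ t, Function.uncurry (fun (x : E3) (t : ℝ) => W (t, x)) (x, t) ∂(volume.restrict (Set.Ioc a T))) (volume.restrict S) :=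
      hswapint.integral_prod_left
    have h2 := h1.const_mul (5 * C₀ ^ 2)
    apply h2.congr
    filter_upwards with x
    rw [← integral_const_mul]
    rfl
  have main1 : (∫ x in S, japR (u (T, x)) * (φ (T, x)) ^ 2)
      ≤ ∫ x in S, ∫ t in Set.Ioc a T, 5 * C₀ ^ 2 * W (t, x) :=
    setIntegral_mono_on hint1 hint2 hSm keyx
  have hswap : (∫ x in S, ∫ t in Set.Ioc a T, W (t, x))
      = ∫ t in Set.Ioc a T, ∫ x in S, W (t, x) :=
    integral_integral_swap hswapint
  calc (∫ x in S, japR (u (T, x)) * (φ (T, x)) ^ 2)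
      ≤ ∫ x in S, ∫ t in Set.Ioc a T, 5 * C₀ ^ 2 * W (t, x) := main1
    _ = 5 * C₀ ^ 2 * ∫ x in S, ∫ t in Set.Ioc a T, W (t, x) := by
        simp only [integral_const_mul]
    _ = 5 * C₀ ^ 2 * ∫ t in Set.Ioc a T, ∫ x in S, W (t, x) := by rw [hswap]
    _ = 5 * C₀ ^ 2 * ∫ t in a..T, ∫ x in S, W (t, x) := by
        rw [intervalIntegral.integral_of_le haT]
end
end
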